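/- Suppose k = k' and that all doctors have identical ordinal preferences over hospitals. Precisely: let (H,D,U) be a market with |D| = |H| = n, every doctor–hospital pair mutually acceptable, and all doctors inducing the same ordinal ranking of the hospitals. Let 1 ≤ k ≤ n, let μ̂ be any (k,k)-pairwise-stable interview schedule (in particular the doctor-optimal one), let μ^I be the doctor-optimal stable matching of the interview-truncated market, and let μ^DA be the doctor-optimal stable matching of the original market. Then for every doctor d, the rank-order of μ^I(d) in d's interview-truncated preference is weakly lower (i.e., weakly smaller as a number) than the rank-order of μ^DA(d) in d's actual preference. -/

import Mathlib

open Finset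

/-- A market: finite sets of doctors `D` and hospitals `H`, utilities for each side
(including the outside option `oD d = u_d(d)`, `oH h = u_h(h)`), with strict preferences. -/
structure Market (D H : Type*) where
  uD : D → H → ℝ
  oD : D → ℝ
  uH : H → D → ℝ
  oH : H → ℝ
  injD : ∀ d, Function.Injective fun x : Option H => x.elim (oD d) (uD d)
  injH : ∀ h, Function.Injective fun x : Option D => x.elim (oH h) (uH h)

variable {D H : Type*}

/-- Utility of a doctor for a potential partner (`none` = staying unmatched). -/
def Market.valD (M : Market D H) (d : D) (x : Option H) : ℝ := x.elim (M.oD d) (M.uD d)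

/-- Utility of a hospital for a potential partner (`none` = staying unmatched). -/
def Market.valH (M : Market D H) (h : H) (x : Option D) : ℝ := x.elim (M.oH h) (M.uH h)

/-- A (one-to-one) matching between doctors and hospitals. -/
structure Matching (D H : Type*) where
  mD : D → Option H
  mH : H → Option D
  consistent : ∀ d h, mD d = some h ↔ mH h = some d

/-- Stability: individual rationality plus no blocking pair. -/
def Stable (M : Market D H) (μ : Matching D H) : Prop :=
  (∀ d, M.valD d (μ.mD d) ≥ M.oD d) ∧ (∀ h, M.valH h (μ.mH h) ≥ M.oH h) ∧
    ¬ ∃ (d : D) (h : H), M.uD d h > M.valD d (μ.mD d) ∧ M.uH h d > M.valH h (μ.mH h)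

/-- Doctor-optimal stable matching. -/
def DoctorOptimal (M : Market D H) (μ : Matching D H) : Prop :=
  Stable M μ ∧ ∀ μ' : Matching D H, Stable M μ' → ∀ d, M.valD d (μ.mD d) ≥ M.valD d (μ'.mD d)

/-- Rank-order of a potential partner `x` in doctor `d`'s actual preference over `H ∪ {d}`:
one plus the number of alternatives strictly preferred to `x`. -/
noncomputable def rankD [Fintype H] (M : Market D H) (d : D) (x : Option H) : ℕ :=
  1 + (univ.filter fun h' : H => M.uD d h' > M.valD d x).card
    + (if M.oD d > M.valD d x then 1 else 0)

/-- An interview schedule (a many-to-many matching). -/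
structure ISched (D H : Type*) where
  iD : D → Finset H
  iH : H → Finset D
  mem_iff : ∀ d h, h ∈ iD d ↔ d ∈ iH h

/-- `(k,k')`-pairwise stability of an interview schedule. -/
def PairwiseStable (M : Market D H) (k k' : ℕ) (s : ISched D H) : Prop :=
  (∀ d, (s.iD d).card ≤ k ∧ ∀ h ∈ s.iD d, M.uD d h > M.oD d) ∧
  (∀ h, (s.iH h).card ≤ k' ∧ ∀ d ∈ s.iH h, M.uH h d > M.oH h) ∧
  ¬ ∃ (d : D) (h : H), d ∉ s.iH h ∧
      ((∃ h' ∈ s.iD d, M.uD d h > M.uD d h') ∨ (M.uD d h > M.oD d ∧ (s.iD d).card < k)) ∧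
      ((∃ d' ∈ s.iH h, M.uH h d > M.uH h d') ∨ (M.uH h d > M.oH h ∧ (s.iH h).card < k'))

/-- Stability of a matching for the interview-truncated market: only interview partners can be
matched, individual rationality, and no blocking pair among mutually interviewed pairs. -/
def TruncStable (M : Market D H) (s : ISched D H) (μ : Matching D H) : Prop :=
  (∀ d h, μ.mD d = some h → h ∈ s.iD d) ∧
  (∀ d, M.valD d (μ.mD d) ≥ M.oD d) ∧ (∀ h, M.valH h (μ.mH h) ≥ M.oH h) ∧
    ¬ ∃ (d : D) (h : H), h ∈ s.iD d ∧
        M.uD d h > M.valD d (μ.mD d) ∧ M.uH h d > M.valH h (μ.mH h)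

/-- Doctor-optimal stable matching of the interview-truncated market. -/
def TruncDoctorOptimal (M : Market D H) (s : ISched D H) (μ : Matching D H) : Prop :=
  TruncStable M s μ ∧
    ∀ μ' : Matching D H, TruncStable M s μ' → ∀ d, M.valD d (μ.mD d) ≥ M.valD d (μ'.mD d)

/-- Rank-order of a potential partner `x` in doctor `d`'s interview-truncated preference:
one plus the number of alternatives in `μ̂(d) ∪ {d}` strictly preferred to `x`. -/
noncomputable def rankTruncD (M : Market D H) (s : ISched D H) (d : D) (x : Option H) : ℕ :=
  1 + ((s.iD d).filter fun h' : H => M.uD d h' > M.valD d x).card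
    + (if M.oD d > M.valD d x then 1 else 0)

/-- All doctors induce the same ordinal ranking of the hospitals. -/
def CommonDocPrefs (M : Market D H) : Prop :=
  ∀ d d' h h', M.uD d h > M.uD d h' ↔ M.uD d' h > M.uD d' h'

/-- Every doctor–hospital pair is mutually acceptable. -/
def AllAcceptable (M : Market D H) : Prop :=
  ∀ d h, M.uD d h > M.oD d ∧ M.uH h d > M.oH h


section AuxProofs

variable {D H : Type*}

private lemma uD_inj (M : Market D H) (d : D) {h h' : H} (e : M.uD d h = M.uD d h') : h = h' := by
  have := M.injD d (a₁ := some h) (a₂ := some h') e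
  simpa using this

private lemma uH_inj (M : Market D H) (h : H) {d d' : D} (e : M.uH h d = M.uH h d') : d = d' := by
  have := M.injH h (a₁ := some d) (a₂ := some d') e
  simpa using this

private lemma rankD_eq [Fintype H] (M : Market D H) (d : D) (x : Option H)
    (hx : M.valD d x ≥ M.oD d) :
    rankD M d x = 1 + (univ.filter fun h' : H => M.uD d h' > M.valD d x).card := by
  unfold rankD
  rw [if_neg (not_lt.mpr hx)]
  omega

private lemma rank_lt [Fintype H] (M : Market D H) (hacc : AllAcceptable M)
    (hcommon : CommonDocPrefs M) (d d' : D) (h h' : H)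
    (hgt : M.uD d' h' > M.uD d' h) :
    rankD M d' (some h') < rankD M d (some h) := by
  have hv' : M.valD d' (some h') = M.uD d' h' := rfl
  have hv : M.valD d (some h) = M.uD d h := rfl
  rw [rankD_eq M d' (some h') (by rw [hv']; exact le_of_lt (hacc d' h').1),
    rankD_eq M d (some h) (by rw [hv]; exact le_of_lt (hacc d h).1), hv', hv]
  have hconv : (univ.filter fun h'' : H => M.uD d' h'' > M.uD d' h') =
      (univ.filter fun h'' : H => M.uD d h'' > M.uD d h') := by
    apply filter_congr
    intro h'' _
    exact hcommon d' d h'' h'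
  rw [hconv]
  have hgt' : M.uD d h' > M.uD d h := (hcommon d' d h' h).mp hgt
  have hss : (univ.filter fun h'' : H => M.uD d h'' > M.uD d h') ⊂
      (univ.filter fun h'' : H => M.uD d h'' > M.uD d h) := by
    constructor
    · intro x hx
      simp only [mem_filter, mem_univ, true_and] at hx ⊢
      exact lt_trans hgt' hx
    · intro hsub
      have : h' ∈ (univ.filter fun h'' : H => M.uD d h'' > M.uD d h) := by
        simp only [mem_filter, mem_univ, true_and]; exact hgt'
      have := hsub this
      simp only [mem_filter, mem_univ, true_and] at this
      exact lt_irrefl _ this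
  have := card_lt_card hss
  omega

/-- Key claim: a doctor with DA-rank at most `k` is matched in the truncated stable matching
to a hospital at least as good as its DA match. -/
private lemma key_claim {D H : Type*} [Fintype D] [Fintype H]
    (M : Market D H) (k : ℕ)
    (hacc : AllAcceptable M) (hcommon : CommonDocPrefs M)
    (hkH : k ≤ Fintype.card H)
    (s : ISched D H) (hs : PairwiseStable M k k s)
    (μI : Matching D H) (hI : TruncStable M s μI)
    (μDA : Matching D H) (hDA : Stable M μDA) :
    ∀ r : ℕ, ∀ d : D, rankD M d (μDA.mD d) = r → r ≤ k →
      ∃ h', μI.mD d = some h' ∧ M.uD d h' ≥ M.valD d (μDA.mD d) := by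
  intro r
  induction r using Nat.strong_induction_on with
  | _ r IH =>
  intro d hr hrk
  -- d is matched in μDA
  obtain ⟨h, hm⟩ : ∃ h, μDA.mD d = some h := by
    cases e : μDA.mD d with
    | some h => exact ⟨h, rfl⟩
    | none =>
      exfalso
      rw [e] at hr
      have hfil : (univ.filter fun h' : H => M.uD d h' > M.valD d none) = univ := by
        apply filter_true_of_mem
        intro h' _
        exact (hacc d h').1
      have : rankD M d none = 1 + Fintype.card H := by
        unfold rankD
        have h2 : ¬ (M.oD d > M.valD d none) := lt_irrefl _
        rw [hfil, if_neg h2, card_univ]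
        omega
      omega
  have hval : M.valD d (μDA.mD d) = M.uD d h := by rw [hm]; rfl
  have hIRd : M.valD d (μDA.mD d) ≥ M.oD d := hDA.1 d
  have hrform : r = 1 + (univ.filter fun h'' : H => M.uD d h'' > M.uD d h).card := by
    rw [← hr, rankD_eq M d _ hIRd, hval]
  have hcount : (univ.filter fun h'' : H => M.uD d h'' > M.uD d h).card < k := by omega
  -- any doctor that h strictly prefers to d is matched in μDA to a hospital better than h
  have hL2 : ∀ d' : D, M.uH h d' > M.uH h d →
      ∃ h', μDA.mD d' = some h' ∧ M.uD d' h' > M.uD d' h := by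
    intro d' hgt
    have hmH : μDA.mH h = some d := (μDA.consistent d h).mp hm
    have hnb : ¬ (M.uD d' h > M.valD d' (μDA.mD d')) := by
      intro hgt2
      exact hDA.2.2 ⟨d', h, hgt2, by rw [hmH]; exact hgt⟩
    have hge : M.valD d' (μDA.mD d') ≥ M.uD d' h := not_lt.mp hnb
    cases e : μDA.mD d' with
    | none =>
      exfalso
      rw [e] at hge
      exact absurd (hacc d' h).1 (not_lt.mpr hge)
    | some h' =>
      rw [e] at hge
      refine ⟨h', rfl, lt_of_le_of_ne hge ?_⟩
      intro heq
      have hh : h = h' := uD_inj M d' heq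
      have : μDA.mH h = some d' := (μDA.consistent d' h).mp (hh ▸ e)
      rw [hmH] at this
      have : d = d' := by simpa using this
      subst this
      exact lt_irrefl _ hgt
  -- counting bound
  have hcountT : ∀ T : Finset D, (∀ d' ∈ T, M.uH h d' > M.uH h d) →
      T.card ≤ (univ.filter fun h'' : H => M.uD d h'' > M.uD d h).card := by
    intro T hT
    apply Finset.card_le_card_of_injOn (fun d' => (μDA.mD d').getD h)
    · intro d' hd'
      obtain ⟨h', hm', hgt⟩ := hL2 d' (hT d' hd')
      simp only [hm']
      simp only [Option.getD_some, mem_coe, mem_filter, mem_univ, true_and]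
      exact (hcommon d' d h' h).mp hgt
    · intro d₁ hd₁ d₂ hd₂ heq
      obtain ⟨ha, hma, _⟩ := hL2 d₁ (hT d₁ (by simpa using hd₁))
      obtain ⟨hb, hmb, _⟩ := hL2 d₂ (hT d₂ (by simpa using hd₂))
      simp only [hma, hmb, Option.getD_some] at heq
      subst heq
      have h1 := (μDA.consistent d₁ ha).mp hma
      have h2 := (μDA.consistent d₂ ha).mp hmb
      rw [h1] at h2
      simpa using h2
  -- d interviews with its DA match h
  have hsch : h ∈ s.iD d := by
    by_contra hns
    have hnsH : d ∉ s.iH h := fun hc => hns ((s.mem_iff d h).mpr hc)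
    apply hs.2.2
    refine ⟨d, h, hnsH, ?_, ?_⟩
    · -- doctor side of blocking condition
      by_cases hc : (s.iD d).card < k
      · exact Or.inr ⟨(hacc d h).1, hc⟩
      · left
        by_contra hall
        push_neg at hall
        have hsub : s.iD d ⊆ univ.filter fun h'' : H => M.uD d h'' > M.uD d h := by
          intro h' hh'
          simp only [mem_filter, mem_univ, true_and]
          refine lt_of_le_of_ne (hall h' hh') ?_
          intro heq
          exact hns ((uD_inj M d heq) ▸ hh')
        have := card_le_card hsub
        have := (hs.1 d).1
        omega
    · -- hospital side of blocking condition
      by_contra hHf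
      push_neg at hHf
      obtain ⟨hall', hrest⟩ := hHf
      have hcard : (s.iH h).card = k := by
        have h1 := (hs.2.1 h).1
        have h2 := hrest (hacc d h).2
        omega
      have hTgt : ∀ d' ∈ s.iH h, M.uH h d' > M.uH h d := by
        intro d' hd'
        refine lt_of_le_of_ne (hall' d' hd') ?_
        intro heq
        exact hnsH ((uH_inj M h heq) ▸ hd')
      have := hcountT (s.iH h) hTgt
      omega
  -- hospital h prefers d to its μI partner (or is matched to d)
  have hHval : μI.mD d = some h ∨ M.uH h d > M.valH h (μI.mH h) := by
    cases e : μI.mH h with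
    | none =>
      right
      exact (hacc d h).2
    | some d'' =>
      by_cases hdd : d'' = d
      · left
        exact (μI.consistent d h).mpr (hdd ▸ e)
      · right
        show M.uH h d'' < M.uH h d
        by_contra hle
        push_neg at hle
        have hgt : M.uH h d'' > M.uH h d :=
          lt_of_le_of_ne hle (fun heq => hdd (uH_inj M h heq.symm))
        obtain ⟨h₂, hm₂, hgt₂⟩ := hL2 d'' hgt
        have hr₂ : rankD M d'' (μDA.mD d'') < r := by
          rw [hm₂, ← hr, hm]
          exact rank_lt M hacc hcommon d d'' h h₂ hgt₂
        obtain ⟨h₃, hm₃, hge₃⟩ := IH _ hr₂ d'' rfl (le_trans (le_of_lt hr₂) hrk)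
        have hmI : μI.mD d'' = some h := (μI.consistent d'' h).mpr e
        rw [hmI] at hm₃
        have : h = h₃ := by simpa using hm₃
        subst this
        rw [hm₂] at hge₃
        have : M.valD d'' (some h₂) = M.uD d'' h₂ := rfl
        rw [this] at hge₃
        exact absurd hgt₂ (not_lt.mpr hge₃)
  -- conclude
  cases hHval with
  | inl he => exact ⟨h, he, hval.le⟩
  | inr hgt =>
    have hle : M.valD d (μI.mD d) ≥ M.uD d h := by
      by_contra hlt
      push_neg at hlt
      exact hI.2.2.2 ⟨d, h, hsch, hlt, hgt⟩
    cases e : μI.mD d with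
    | none =>
      exfalso
      rw [e] at hle
      exact absurd (hacc d h).1 (not_lt.mpr hle)
    | some h' =>
      rw [e] at hle
      exact ⟨h', rfl, by rw [hval]; exact hle⟩

end AuxProofs

/-- Proposition 1: with `k = k'`, identical doctor preferences, `|D| = |H| = n`,
and all pairs mutually acceptable, for every doctor `d` the rank-order of `μᴵ(d)` in `d`'s
interview-truncated preference is weakly smaller than the rank-order of `μᴰᴬ(d)` in `d`'s
actual preference. -/
theorem aligned_preferences_interviews_improve_rank
    {D H : Type*} [Fintype D] [Fintype H]
    (M : Market D H) (n k : ℕ)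
    (hD : Fintype.card D = n) (hH : Fintype.card H = n)
    (hacc : AllAcceptable M) (hcommon : CommonDocPrefs M)
    (hk1 : 1 ≤ k) (hkn : k ≤ n)
    (s : ISched D H) (hs : PairwiseStable M k k s)
    (μI : Matching D H) (hI : TruncDoctorOptimal M s μI)
    (μDA : Matching D H) (hDA : DoctorOptimal M μDA) :
    ∀ d : D, rankTruncD M s d (μI.mD d) ≤ rankD M d (μDA.mD d) := by
  intro d
  by_cases hcase : rankD M d (μDA.mD d) ≤ k
  · obtain ⟨h', hm', hge⟩ := key_claim M k hacc hcommon (hH ▸ hkn) s hs μI hI.1 μDA hDA.1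
      (rankD M d (μDA.mD d)) d rfl hcase
    have hIRd : M.valD d (μDA.mD d) ≥ M.oD d := hDA.1.1 d
    have hvI : M.valD d (μI.mD d) = M.uD d h' := by rw [hm']; rfl
    have hind : ¬ (M.oD d > M.valD d (μI.mD d)) := by
      rw [hvI]; exact not_lt.mpr (le_trans hIRd hge)
    have hsub : ((s.iD d).filter fun h'' : H => M.uD d h'' > M.valD d (μI.mD d)) ⊆
        (univ.filter fun h'' : H => M.uD d h'' > M.valD d (μDA.mD d)) := by
      intro h'' hh''
      simp only [mem_filter, mem_univ, true_and] at hh'' ⊢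
      have := hh''.2
      rw [hvI] at this
      exact lt_of_le_of_lt hge this
    have hcc := card_le_card hsub
    unfold rankTruncD
    rw [rankD_eq M d _ hIRd, if_neg hind]
    omega
  · push_neg at hcase
    have hbound : rankTruncD M s d (μI.mD d) ≤ k + 1 := by
      cases e : μI.mD d with
      | none =>
        unfold rankTruncD
        have h1 : ((s.iD d).filter fun h'' : H => M.uD d h'' > M.valD d none).card ≤ k :=
          le_trans (card_filter_le _ _) (hs.1 d).1
        have h2 : ¬ (M.oD d > M.valD d none) := lt_irrefl _
        rw [if_neg h2]
        omega
      | some h' =>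
        have hmem : h' ∈ s.iD d := hI.1.1 d h' e
        have hind : ¬ (M.oD d > M.valD d (some h')) := by
          have := hI.1.2.1 d
          rw [e] at this
          exact not_lt.mpr this
        have hss : ((s.iD d).filter fun h'' : H => M.uD d h'' > M.valD d (some h')) ⊂ s.iD d := by
          constructor
          · exact filter_subset _ _
          · intro hsub2
            have := hsub2 hmem
            simp only [mem_filter] at this
            exact lt_irrefl _ this.2
        have h1 := card_lt_card hss
        have h2 := (hs.1 d).1
        unfold rankTruncD
        rw [if_neg hind]
        omega
    omega
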